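/- Let p ≥ 0 and δ > 0 satisfy 4δp < π, and let μ₀ = (π² − 16δ²p²)/(16δ²(1+2p)). Suppose λ : ℝ → ℂ is a branch of characteristic roots, i.e. λ is differentiable at μ₀, λ(μ₀) = i·π/(2δ), and λ(μ) + 2√(p² + μ(1+2p))·e^{−λ(μ)δ} = 0 for all μ in some neighborhood of μ₀. Then λ'(μ₀) = (16δ(1+2p)/(π(4+π²)))·(π/2 + i); in particular Re λ'(μ₀) = 8(1+2p)δ/(4+π²) > 0 and Im λ'(μ₀) = 16δ(1+2p)/(π(4+π²)) > 0, so the transversality condition for a Hopf bifurcation at μ = μ₀ holds. -/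

import Mathlib

open Filter in
/-- Let `p ≥ 0` and `δ > 0` satisfy `4δp < π`, and let
`μ₀ = (π² − 16δ²p²)/(16δ²(1+2p))`.  Suppose `λ : ℝ → ℂ` is a branch of
characteristic roots: `λ` is differentiable at `μ₀`, `λ(μ₀) = i·π/(2δ)`, and
`λ(μ) + 2√(p² + μ(1+2p))·e^{−λ(μ)δ} = 0` for all `μ` in a neighborhood of `μ₀`.
Then `λ'(μ₀) = (16δ(1+2p)/(π(4+π²)))·(π/2 + i)`; in particular
`Re λ'(μ₀) = 8(1+2p)δ/(4+π²) > 0` and `Im λ'(μ₀) = 16δ(1+2p)/(π(4+π²)) > 0`,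
so the transversality condition for a Hopf bifurcation at `μ = μ₀` holds. -/
theorem char_root_branch_transversality (p δ : ℝ) (hp : 0 ≤ p) (hδ : 0 < δ)
    (hpδ : 4 * δ * p < Real.pi)
    (lam : ℝ → ℂ)
    (hdiff : DifferentiableAt ℝ lam
      ((Real.pi ^ 2 - 16 * δ ^ 2 * p ^ 2) / (16 * δ ^ 2 * (1 + 2 * p))))
    (hval : lam ((Real.pi ^ 2 - 16 * δ ^ 2 * p ^ 2) / (16 * δ ^ 2 * (1 + 2 * p)))
      = Complex.I * (Real.pi / (2 * δ)))
    (hroot : ∀ᶠ μ in nhds ((Real.pi ^ 2 - 16 * δ ^ 2 * p ^ 2) / (16 * δ ^ 2 * (1 + 2 * p))),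
      lam μ + ((2 * Real.sqrt (p ^ 2 + μ * (1 + 2 * p)) : ℝ) : ℂ) *
          Complex.exp (-lam μ * (δ : ℂ)) = 0) :
    deriv lam ((Real.pi ^ 2 - 16 * δ ^ 2 * p ^ 2) / (16 * δ ^ 2 * (1 + 2 * p)))
        = ((16 * δ * (1 + 2 * p) / (Real.pi * (4 + Real.pi ^ 2)) : ℝ) : ℂ) *
            ((Real.pi / 2 : ℝ) + Complex.I) ∧
    (deriv lam ((Real.pi ^ 2 - 16 * δ ^ 2 * p ^ 2) / (16 * δ ^ 2 * (1 + 2 * p)))).re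
        = 8 * (1 + 2 * p) * δ / (4 + Real.pi ^ 2) ∧
    0 < (deriv lam ((Real.pi ^ 2 - 16 * δ ^ 2 * p ^ 2) / (16 * δ ^ 2 * (1 + 2 * p)))).re ∧
    (deriv lam ((Real.pi ^ 2 - 16 * δ ^ 2 * p ^ 2) / (16 * δ ^ 2 * (1 + 2 * p)))).im
        = 16 * δ * (1 + 2 * p) / (Real.pi * (4 + Real.pi ^ 2)) ∧
    0 < (deriv lam ((Real.pi ^ 2 - 16 * δ ^ 2 * p ^ 2) / (16 * δ ^ 2 * (1 + 2 * p)))).im := by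
  have hπ : (0:ℝ) < Real.pi := Real.pi_pos
  set μ₀ : ℝ := (Real.pi ^ 2 - 16 * δ ^ 2 * p ^ 2) / (16 * δ ^ 2 * (1 + 2 * p)) with hμ₀
  have h2p : (0:ℝ) < 1 + 2 * p := by linarith
  have hδ0 : δ ≠ 0 := ne_of_gt hδ
  have h2p0 : (1 + 2 * p) ≠ 0 := ne_of_gt h2p
  have hπ0 : Real.pi ≠ 0 := ne_of_gt hπ
  have hπC : (Real.pi : ℂ) ≠ 0 := by exact_mod_cast hπ0
  have hδC : (δ : ℂ) ≠ 0 := by exact_mod_cast hδ0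
  have hg : p ^ 2 + μ₀ * (1 + 2 * p) = (Real.pi / (4 * δ)) ^ 2 := by
    rw [hμ₀]; field_simp; ring
  have hs : Real.sqrt (p ^ 2 + μ₀ * (1 + 2 * p)) = Real.pi / (4 * δ) := by
    rw [hg, Real.sqrt_sq (by positivity)]
  have hgne : p ^ 2 + μ₀ * (1 + 2 * p) ≠ 0 := by
    rw [hg]; positivity
  set L : ℂ := deriv lam μ₀ with hL
  have hlam : HasDerivAt lam L μ₀ := hdiff.hasDerivAt
  have hE : Complex.exp (-lam μ₀ * (δ:ℂ)) = -Complex.I := by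
    rw [hval]
    have harg : -(Complex.I * ((Real.pi:ℂ) / (2 * (δ:ℂ)))) * (δ:ℂ)
        = ((-(Real.pi/2) : ℝ):ℂ) * Complex.I := by
      push_cast; field_simp
    rw [harg, Complex.exp_mul_I, ← Complex.ofReal_cos, ← Complex.ofReal_sin]
    rw [Real.cos_neg, Real.sin_neg, Real.cos_pi_div_two, Real.sin_pi_div_two]
    simp
  have hinner : HasDerivAt (fun μ : ℝ => p ^ 2 + μ * (1 + 2 * p)) (1 + 2 * p) μ₀ := by
    simpa using ((hasDerivAt_id μ₀).mul_const (1 + 2 * p)).const_add (p ^ 2)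
  have hsqrt : HasDerivAt (fun μ : ℝ => 2 * Real.sqrt (p ^ 2 + μ * (1 + 2 * p)))
      (2 * (1 / (2 * Real.sqrt (p ^ 2 + μ₀ * (1 + 2 * p))) * (1 + 2 * p))) μ₀ :=
    ((Real.hasDerivAt_sqrt hgne).comp μ₀ hinner).const_mul 2
  have hexp : HasDerivAt (fun μ : ℝ => Complex.exp (-lam μ * (δ:ℂ)))
      (Complex.exp (-lam μ₀ * (δ:ℂ)) * (-L * (δ:ℂ))) μ₀ :=
    (hlam.neg.mul_const (δ:ℂ)).cexp
  have hF : HasDerivAt (fun μ : ℝ => lam μ + ((2 * Real.sqrt (p ^ 2 + μ * (1 + 2 * p)) : ℝ) : ℂ) *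
        Complex.exp (-lam μ * (δ:ℂ)))
      (L + (((2 * (1 / (2 * Real.sqrt (p ^ 2 + μ₀ * (1 + 2 * p))) * (1 + 2 * p)) : ℝ) : ℂ) *
          Complex.exp (-lam μ₀ * (δ:ℂ))
        + ((2 * Real.sqrt (p ^ 2 + μ₀ * (1 + 2 * p)) : ℝ) : ℂ) *
          (Complex.exp (-lam μ₀ * (δ:ℂ)) * (-L * (δ:ℂ))))) μ₀ :=
    hlam.add (hsqrt.ofReal_comp.mul hexp)
  have hF0 : HasDerivAt (fun μ : ℝ => lam μ + ((2 * Real.sqrt (p ^ 2 + μ * (1 + 2 * p)) : ℝ) : ℂ) *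
        Complex.exp (-lam μ * (δ:ℂ))) 0 μ₀ :=
    (hasDerivAt_const μ₀ (0:ℂ)).congr_of_eventuallyEq hroot
  have hD0 := hF.unique hF0
  rw [hs, hE] at hD0
  set X : ℂ := 2 * (Real.pi:ℂ) + Complex.I * (Real.pi:ℂ)^2 with hX
  have h4δ : (4 * (δ:ℂ)) ≠ 0 := by simp [hδC]
  have hclean : L * X = Complex.I * (8 * (δ:ℂ) * (1 + 2 * (p:ℂ))) := by
    have hmul : (4 * (δ:ℂ)) * (L * X) = (4 * (δ:ℂ)) * (Complex.I * (8 * (δ:ℂ) * (1 + 2 * (p:ℂ)))) := by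
      push_cast at hD0
      rw [hX]
      field_simp at hD0
      linear_combination 2 * (δ:ℂ) * hD0
    exact mul_left_cancel₀ h4δ hmul
  have hXne : X ≠ 0 := by
    intro h
    rw [hX] at h
    have h2 := congrArg Complex.re h
    simp [← Complex.ofReal_pow] at h2
  have hT : (((16 * δ * (1 + 2 * p) / (Real.pi * (4 + Real.pi ^ 2)) : ℝ) : ℂ) *
      ((Real.pi / 2 : ℝ) + Complex.I)) * X = Complex.I * (8 * (δ:ℂ) * (1 + 2 * (p:ℂ))) := by
    rw [hX]
    have h4π : ((Real.pi * (4 + Real.pi ^ 2) : ℝ) : ℂ) ≠ 0 := by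
      exact_mod_cast mul_ne_zero hπ0 (by positivity)
    push_cast at h4π ⊢
    have h4π2C : (4 + (Real.pi:ℂ)^2) ≠ 0 := right_ne_zero_of_mul h4π
    field_simp
    ring_nf
    simp only [Complex.I_sq]
    ring
  have hLval : L = ((16 * δ * (1 + 2 * p) / (Real.pi * (4 + Real.pi ^ 2)) : ℝ) : ℂ) *
      ((Real.pi / 2 : ℝ) + Complex.I) :=
    mul_right_cancel₀ hXne (hclean.trans hT.symm)
  have h4π2 : (0:ℝ) < 4 + Real.pi ^ 2 := by positivity
  have hre : (((16 * δ * (1 + 2 * p) / (Real.pi * (4 + Real.pi ^ 2)) : ℝ) : ℂ) *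
      ((Real.pi / 2 : ℝ) + Complex.I)).re = 8 * (1 + 2 * p) * δ / (4 + Real.pi ^ 2) := by
    simp only [Complex.mul_re, Complex.add_re, Complex.add_im, Complex.ofReal_re,
      Complex.ofReal_im, Complex.I_re, Complex.I_im]
    field_simp
    ring
  have him : (((16 * δ * (1 + 2 * p) / (Real.pi * (4 + Real.pi ^ 2)) : ℝ) : ℂ) *
      ((Real.pi / 2 : ℝ) + Complex.I)).im = 16 * δ * (1 + 2 * p) / (Real.pi * (4 + Real.pi ^ 2)) := by
    simp only [Complex.mul_im, Complex.add_re, Complex.add_im, Complex.ofReal_re,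
      Complex.ofReal_im, Complex.I_re, Complex.I_im]
    ring
  refine ⟨hLval, ?_, ?_, ?_, ?_⟩ <;> rw [hLval]
  · exact hre
  · rw [hre]; positivity
  · exact him
  · rw [him]; positivity
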